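/- Suppose p̄ ≤ n and the matrices A₀,...,A_{n-1} ∈ M₂(ℂ) satisfy a₁₁⁽ⁱ⁾ = a₂₁⁽ⁱ⁾ = 0 for 0 ≤ i ≤ p̄−1 (entries of Aᵢ). Then t^{p̄} divides det(M(t)), and the vector e₁ = (1,0)ᵀ lies in the nullspace of M(0). -/
import Mathlib


/-- If p̄ ≤ n and the first-column entries of A₀,…,A_{p̄−1} vanish, then
t^p̄ divides det M(t) and e₁ = (1,0)ᵀ lies in the nullspace of M(0). -/
theorem stmt10 (n pbar : ℕ) (hp : 1 ≤ pbar) (hpn : pbar ≤ n)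
    (A : Fin n → Matrix (Fin 2) (Fin 2) ℂ)
    (hzero : ∀ i : Fin n, (i : ℕ) ≤ pbar - 1 → A i 0 0 = 0 ∧ A i 1 0 = 0) :
    ((Polynomial.X : Polynomial ℂ) ^ pbar ∣
      ((Polynomial.X : Polynomial ℂ) ^ n • (1 : Matrix (Fin 2) (Fin 2) (Polynomial ℂ)) +
        ∑ i : Fin n, (Polynomial.X : Polynomial ℂ) ^ (i : ℕ) • (A i).map Polynomial.C).det) ∧
    ((0 : ℂ) ^ n • (1 : Matrix (Fin 2) (Fin 2) ℂ) +
      ∑ i : Fin n, (0 : ℂ) ^ (i : ℕ) • A i).mulVec ![1, 0] = 0 := by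
  have hn : 1 ≤ n := le_trans hp hpn
  set M := ((Polynomial.X : Polynomial ℂ) ^ n • (1 : Matrix (Fin 2) (Fin 2) (Polynomial ℂ)) +
        ∑ i : Fin n, (Polynomial.X : Polynomial ℂ) ^ (i : ℕ) • (A i).map Polynomial.C) with hM
  have hterm : ∀ (i : Fin n) (j : Fin 2),
      (Polynomial.X : Polynomial ℂ) ^ pbar ∣ (Polynomial.X : Polynomial ℂ) ^ (i : ℕ) *
        Polynomial.C (A i j 0) := by
    intro i j
    by_cases h : (i : ℕ) ≤ pbar - 1
    · have hz := hzero i h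
      have : A i j 0 = 0 := by
        fin_cases j
        · exact hz.1
        · exact hz.2
      simp [this]
    · have hi : pbar ≤ (i : ℕ) := by omega
      exact Dvd.dvd.mul_right (pow_dvd_pow _ hi) _
  have hcol : ∀ j : Fin 2, (Polynomial.X : Polynomial ℂ) ^ pbar ∣ M j 0 := by
    intro j
    have : M j 0 = (Polynomial.X : Polynomial ℂ) ^ n * (1 : Matrix (Fin 2) (Fin 2) (Polynomial ℂ)) j 0
        + ∑ i : Fin n, (Polynomial.X : Polynomial ℂ) ^ (i : ℕ) * Polynomial.C (A i j 0) := by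
      simp [hM, Matrix.add_apply, Matrix.sum_apply, Matrix.smul_apply, smul_eq_mul,
        Matrix.map_apply]
    rw [this]
    refine dvd_add (Dvd.dvd.mul_right (pow_dvd_pow _ hpn) _) ?_
    exact Finset.dvd_sum fun i _ => hterm i j
  constructor
  · rw [Matrix.det_fin_two]
    exact dvd_sub (Dvd.dvd.mul_right (hcol 0) _) ((hcol 1).mul_left _)
  · have h0 : (0:ℂ) ^ n = 0 := zero_pow (by omega)
    have hsum : (∑ i : Fin n, (0 : ℂ) ^ (i : ℕ) • A i) = A ⟨0, by omega⟩ := by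
      rw [Finset.sum_eq_single (⟨0, by omega⟩ : Fin n)]
      · simp
      · intro b _ hb
        have : (b : ℕ) ≠ 0 := by
          intro h; apply hb; exact Fin.ext h
        simp [zero_pow this]
      · simp
    rw [h0, hsum, zero_smul, zero_add]
    have hz := hzero ⟨0, by omega⟩ (Nat.zero_le _)
    funext j
    fin_cases j <;>
      simp [Matrix.mulVec, dotProduct, Fin.sum_univ_two, hz.1, hz.2]
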